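/- In the convex setting (CP), suppose x̂ ∈ 𝒳 satisfies c_i(x̂) < 0 for all i. Let x ∈ 𝒳 with c_i(x) ≤ 0 for all i, and let z* ∈ 𝒳, μ ∈ ℝ^m_{≥0}, l ∈ ∂r(z*) satisfy the GHMA subproblem KKT conditions at x. Let C₁ > 0 satisfy ‖x − z*‖ ≤ C₁, ‖x − x̂‖ ≤ C₁ and ‖z* − x̂‖ ≤ C₁, and let F* ∈ ℝ satisfy F* ≤ F(z*). If ‖z* − x‖ ≤ min_{i∈[m]} (−c_i(x̂)/(6L_iC₁))^{1/κ}, then ‖μ‖_∞ ≤ (2(F(x̂) − F*) + 4L·C₁^{κ+1}) / min_{i∈[m]}(−c_i(x̂)). -/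

import Mathlib

open scoped RealInnerProductSpace
open Real Set

/-- The convex subdifferential of `r` at `u`. -/
def subgrad {n : ℕ} (r : EuclideanSpace ℝ (Fin n) → ℝ)
    (u : EuclideanSpace ℝ (Fin n)) : Set (EuclideanSpace ℝ (Fin n)) :=
  {l | ∀ z, r u + ⟪l, z - u⟫ ≤ r z}

lemma grad_convex_le {n : ℕ} {f : EuclideanSpace ℝ (Fin n) → ℝ}
    {g x : EuclideanSpace ℝ (Fin n)}
    (hconv : ConvexOn ℝ univ f) (hgrad : HasGradientAt f g x)
    (y : EuclideanSpace ℝ (Fin n)) : f x + ⟪g, y - x⟫ ≤ f y := by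
  set φ : ℝ → ℝ := fun t => f (x + t • (y - x)) with hφ
  have h1 : HasDerivAt (fun t : ℝ => x + t • (y - x)) (y - x) 0 := by
    simpa using ((hasDerivAt_id (0:ℝ)).smul_const (y - x)).const_add x
  have h2 := hgrad.hasFDerivAt
  have h3 : HasDerivAt φ (⟪g, y - x⟫) 0 := by
    have := HasFDerivAt.comp_hasDerivAt (0:ℝ) (by simpa using h2) h1
    exact this
  have hconvφ : ConvexOn ℝ univ φ := by
    have h4 := hconv.comp_affineMap (AffineMap.lineMap x y : ℝ →ᵃ[ℝ] EuclideanSpace ℝ (Fin n))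
    have : (f ∘ (AffineMap.lineMap x y : ℝ →ᵃ[ℝ] EuclideanSpace ℝ (Fin n))) = φ := by
      funext t
      simp [φ, AffineMap.lineMap_apply, add_comm]
    simpa [this] using h4
  have h5 : (⟪g, y - x⟫) ≤ slope φ 0 1 :=
    hconvφ.le_slope_of_hasDerivAt (mem_univ 0) (mem_univ 1) one_pos h3
  have hs : slope φ 0 1 = f y - f x := by
    rw [slope_def_field]; simp [φ]
  rw [hs] at h5
  linarith

/-- (Lemma 2 in the paper: dual boundedness for GHMA in the convex
setting.)  Given a strictly feasible Slater point `x̂` and the GHMA subproblem KKT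
conditions at a feasible `x`, if the residual `‖z* − x‖` is at most
`min_i (−cᵢ(x̂)/(6LᵢC₁))^{1/κ}`, then
`‖μ‖_∞ ≤ (2(F(x̂) − F*) + 4LC₁^{κ+1}) / min_i(−cᵢ(x̂))`. -/
theorem ghma_dual_boundedness {n m : ℕ} (hm : 0 < m)
    (X : Set (EuclideanSpace ℝ (Fin n))) (hXconv : Convex ℝ X) (hXclosed : IsClosed X)
    (f r : EuclideanSpace ℝ (Fin n) → ℝ)
    (c : Fin m → EuclideanSpace ℝ (Fin n) → ℝ)
    (f' : EuclideanSpace ℝ (Fin n) → EuclideanSpace ℝ (Fin n))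
    (c' : Fin m → EuclideanSpace ℝ (Fin n) → EuclideanSpace ℝ (Fin n))
    (hf : ∀ x, HasGradientAt f (f' x) x)
    (hc : ∀ i x, HasGradientAt (c i) (c' i x) x)
    (hfconv : ConvexOn ℝ univ f) (hcconv : ∀ i, ConvexOn ℝ univ (c i))
    (hrconv : ConvexOn ℝ univ r)
    (κ L : ℝ) (Li : Fin m → ℝ)
    (hκ0 : 0 < κ) (hκ1 : κ ≤ 1) (hL : 0 < L) (hLi : ∀ i, 0 < Li i)
    (hfholder : ∀ x y, ‖f' x - f' y‖ ≤ L * ‖x - y‖ ^ κ)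
    (hcholder : ∀ i x y, ‖c' i x - c' i y‖ ≤ Li i * ‖x - y‖ ^ κ)
    -- the Slater point
    (xhat : EuclideanSpace ℝ (Fin n)) (hxhatX : xhat ∈ X) (hxhat : ∀ i, c i xhat < 0)
    -- the feasible base point
    (x : EuclideanSpace ℝ (Fin n)) (hxX : x ∈ X) (hxfeas : ∀ i, c i x ≤ 0)
    -- KKT conditions of the GHMA subproblem (CP_x)
    (zstar : EuclideanSpace ℝ (Fin n)) (hzX : zstar ∈ X)
    (μ : Fin m → ℝ) (hμ : ∀ i, 0 ≤ μ i)
    (l : EuclideanSpace ℝ (Fin n)) (hl : l ∈ subgrad r zstar)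
    (hstat : ∀ z ∈ X, 0 ≤
      ⟪f' x + (L * ‖zstar - x‖ ^ (κ - 1)) • (zstar - x) +
        (∑ i, μ i • (c' i x + (Li i * ‖zstar - x‖ ^ (κ - 1)) • (zstar - x))) + l,
        z - zstar⟫)
    (hconstr : ∀ i, c i x + ⟪c' i x, zstar - x⟫ +
      (Li i / (κ + 1)) * ‖zstar - x‖ ^ (κ + 1) ≤ 0)
    (hcomp : ∀ i, μ i * (c i x + ⟪c' i x, zstar - x⟫ +
      (Li i / (κ + 1)) * ‖zstar - x‖ ^ (κ + 1)) = 0)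
    -- the constants
    (C₁ : ℝ) (hC₁ : 0 < C₁)
    (hC₁a : ‖x - zstar‖ ≤ C₁) (hC₁b : ‖x - xhat‖ ≤ C₁) (hC₁c : ‖zstar - xhat‖ ≤ C₁)
    (Fstar : ℝ) (hFstar : Fstar ≤ f zstar + r zstar)
    -- smallness of the residual: ‖z* − x‖ ≤ min_i (−cᵢ(x̂)/(6LᵢC₁))^{1/κ}
    (hsmall : ∀ i, ‖zstar - x‖ ≤ (-c i xhat / (6 * Li i * C₁)) ^ (1 / κ)) :
    ∀ i, μ i ≤ (2 * ((f xhat + r xhat) - Fstar) + 4 * L * C₁ ^ (κ + 1)) /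
      (Finset.univ.inf' ⟨⟨0, hm⟩, Finset.mem_univ _⟩ fun j => -c j xhat) := by
  intro j
  set d := zstar - x with hd
  set u := xhat - zstar with hu
  set s := ‖zstar - x‖ with hs
  set M := Finset.univ.inf' (⟨⟨0, hm⟩, Finset.mem_univ _⟩ : Finset.univ.Nonempty)
      (fun j => -c j xhat) with hM
  have hs0 : 0 ≤ s := norm_nonneg _
  have hsC : s ≤ C₁ := by rw [hs, ← norm_sub_rev]; exact hC₁a
  have huC : ‖u‖ ≤ C₁ := by rw [hu, norm_sub_rev]; exact hC₁c
  have hMpos : 0 < M := by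
    rw [hM]; apply (Finset.lt_inf'_iff _).2
    intro i _; linarith [hxhat i]
  have hMle : M ≤ -c j xhat := Finset.inf'_le _ (Finset.mem_univ j)
  have hsk : ∀ i, s ^ κ ≤ -c i xhat / (6 * Li i * C₁) := by
    intro i
    have hLi' := hLi i
    have ha : 0 ≤ -c i xhat / (6 * Li i * C₁) := by
      apply div_nonneg (by linarith [hxhat i]) (by positivity)
    have h1 := Real.rpow_le_rpow hs0 (hsmall i) hκ0.le
    rwa [← Real.rpow_mul ha, one_div_mul_cancel hκ0.ne', Real.rpow_one] at h1
  have hsk1 : s ^ (κ + 1) = s ^ κ * s := by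
    rw [Real.rpow_add' hs0 (by linarith), Real.rpow_one]
  have hC₁k : C₁ ^ (κ + 1) = C₁ ^ κ * C₁ := by
    rw [Real.rpow_add' hC₁.le (by linarith), Real.rpow_one]
  have hskC : s ^ κ ≤ C₁ ^ κ := Real.rpow_le_rpow hs0 hsC hκ0.le
  have hsknn : 0 ≤ s ^ κ := Real.rpow_nonneg hs0 _
  -- key inner product bound
  have he : s ^ (κ - 1) * ⟪d, u⟫ ≤ s ^ κ * C₁ := by
    by_cases hd0 : d = 0
    · have hz : s = 0 := by rw [hs, ← hd, hd0, norm_zero]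
      rw [hd0, inner_zero_left, mul_zero, hz, Real.zero_rpow hκ0.ne', zero_mul]
    · have hspos : 0 < s := by rw [hs, ← hd]; exact norm_pos_iff.mpr hd0
      have h1 : ⟪d, u⟫ ≤ s * C₁ := by
        calc ⟪d, u⟫ ≤ ‖d‖ * ‖u‖ := real_inner_le_norm d u
        _ ≤ s * C₁ := by rw [hd, ← hs]; exact mul_le_mul_of_nonneg_left huC hs0
      have h2 : s ^ (κ - 1) * ⟪d, u⟫ ≤ s ^ (κ - 1) * (s * C₁) :=
        mul_le_mul_of_nonneg_left h1 (Real.rpow_nonneg hs0 _)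
      have h3 : s ^ (κ - 1) * (s * C₁) = s ^ κ * C₁ := by
        rw [← mul_assoc, ← Real.rpow_add_one hspos.ne' (κ - 1), sub_add_cancel]
      linarith
  -- stationarity expanded at xhat
  have hst : 0 ≤ ⟪f' x, u⟫ + L * s ^ (κ - 1) * ⟪d, u⟫ +
      (∑ i, μ i * (⟪c' i x, u⟫ + Li i * s ^ (κ - 1) * ⟪d, u⟫)) + ⟪l, u⟫ := by
    have h0 := hstat xhat hxhatX
    rw [← hu] at h0
    simp only [inner_add_left, sum_inner, real_inner_smul_left] at h0
    linarith [h0]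
  -- subgradient bound
  have hlr : ⟪l, u⟫ ≤ r xhat - r zstar := by
    have h0 := hl xhat
    rw [← hu] at h0; linarith
  -- convexity and Hölder bounds for the f-term
  have hfz : f zstar + ⟪f' zstar, u⟫ ≤ f xhat := by
    have h0 := grad_convex_le hfconv (hf zstar) xhat
    rwa [← hu] at h0
  have hfu : ⟪f' x, u⟫ ≤ (f xhat - f zstar) + L * C₁ ^ (κ + 1) := by
    have h1 : ⟪f' x - f' zstar, u⟫ ≤ ‖f' x - f' zstar‖ * ‖u‖ := real_inner_le_norm _ _
    have h2 : ‖f' x - f' zstar‖ * ‖u‖ ≤ (L * s ^ κ) * C₁ := by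
      have h3 : ‖f' x - f' zstar‖ ≤ L * s ^ κ := by
        have := hfholder x zstar
        rwa [norm_sub_rev x zstar, ← hs] at this
      exact mul_le_mul h3 huC (norm_nonneg _) (by positivity)
    have h4 : L * s ^ κ * C₁ ≤ L * C₁ ^ (κ + 1) := by
      rw [hC₁k]
      have := mul_le_mul_of_nonneg_right hskC hC₁.le
      nlinarith
    have h5 : ⟪f' x, u⟫ = ⟪f' zstar, u⟫ + ⟪f' x - f' zstar, u⟫ := by
      rw [inner_sub_left]; ring
    linarith
  have hc1 : ∀ i, c i x + ⟪c' i x, xhat - x⟫ ≤ c i xhat :=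
    fun i => grad_convex_le (hcconv i) (hc i x) xhat
  have husplit : u = (xhat - x) - d := by rw [hu, hd]; abel
  -- per-coordinate sum bound
  have hterm : ∀ i, μ i * (⟪c' i x, u⟫ + Li i * s ^ (κ - 1) * ⟪d, u⟫) ≤
      μ i * (2 / 3 * c i xhat) := by
    intro i
    have hLi' := hLi i
    have hcu : ⟪c' i x, u⟫ = ⟪c' i x, xhat - x⟫ - ⟪c' i x, d⟫ := by
      rw [husplit, inner_sub_right]
    have h1 : μ i * ⟪c' i x, xhat - x⟫ ≤ μ i * (c i xhat - c i x) :=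
      mul_le_mul_of_nonneg_left (by linarith [hc1 i]) (hμ i)
    have h2 := hcomp i
    have ht4 : Li i * (s ^ κ * C₁) ≤ -c i xhat / 6 := by
      have h6 := mul_le_mul_of_nonneg_left (hsk i) (by positivity : (0:ℝ) ≤ Li i * C₁)
      have hLne : Li i ≠ 0 := hLi'.ne'
      have hCne : C₁ ≠ 0 := hC₁.ne'
      have heq : Li i * C₁ * (-c i xhat / (6 * Li i * C₁)) = -c i xhat / 6 := by
        field_simp
      rw [heq] at h6
      linarith [h6]
    have ht3 : (Li i / (κ + 1)) * s ^ (κ + 1) ≤ Li i * (s ^ κ * C₁) := by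
      rw [hsk1]
      have h5 : Li i / (κ + 1) ≤ Li i := div_le_self hLi'.le (by linarith)
      have h7 : s ^ κ * s ≤ s ^ κ * C₁ := mul_le_mul_of_nonneg_left hsC hsknn
      calc (Li i / (κ + 1)) * (s ^ κ * s) ≤ Li i * (s ^ κ * s) :=
            mul_le_mul_of_nonneg_right h5 (by positivity)
        _ ≤ Li i * (s ^ κ * C₁) := mul_le_mul_of_nonneg_left h7 hLi'.le
    have ht2 : Li i * s ^ (κ - 1) * ⟪d, u⟫ ≤ Li i * (s ^ κ * C₁) := by
      have h6 := mul_le_mul_of_nonneg_left he hLi'.le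
      linarith [h6]
    have hμt2 : μ i * (Li i * s ^ (κ - 1) * ⟪d, u⟫) ≤ μ i * (-c i xhat / 6) :=
      mul_le_mul_of_nonneg_left (ht2.trans ht4) (hμ i)
    have hμt3 : μ i * ((Li i / (κ + 1)) * s ^ (κ + 1)) ≤ μ i * (-c i xhat / 6) :=
      mul_le_mul_of_nonneg_left (ht3.trans ht4) (hμ i)
    have hcs : μ i * (-⟪c' i x, d⟫) =
        μ i * c i x + μ i * ((Li i / (κ + 1)) * s ^ (κ + 1)) := by
      linear_combination -h2
    have hexp : μ i * (⟪c' i x, u⟫ + Li i * s ^ (κ - 1) * ⟪d, u⟫) =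
        μ i * ⟪c' i x, xhat - x⟫ + μ i * (-⟪c' i x, d⟫) +
        μ i * (Li i * s ^ (κ - 1) * ⟪d, u⟫) := by
      rw [hcu]; ring
    rw [hexp, hcs]
    linarith
  -- sum bound
  have hsum : (∑ i, μ i * (⟪c' i x, u⟫ + Li i * s ^ (κ - 1) * ⟪d, u⟫)) ≤
      μ j * (2 / 3 * c j xhat) := by
    have h1 : (∑ i, μ i * (⟪c' i x, u⟫ + Li i * s ^ (κ - 1) * ⟪d, u⟫)) ≤
        ∑ i, μ i * (2 / 3 * c i xhat) :=
      Finset.sum_le_sum fun i _ => hterm i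
    have h2 : ∑ i ∈ Finset.univ.erase j, μ i * (2 / 3 * c i xhat) ≤ 0 :=
      Finset.sum_nonpos fun i _ => mul_nonpos_of_nonneg_of_nonpos (hμ i)
        (by linarith [hxhat i])
    have h3 : μ j * (2 / 3 * c j xhat) +
        ∑ i ∈ Finset.univ.erase j, μ i * (2 / 3 * c i xhat) =
        ∑ i, μ i * (2 / 3 * c i xhat) := by
      exact Finset.add_sum_erase Finset.univ (fun i => μ i * (2 / 3 * c i xhat)) (Finset.mem_univ j)
    linarith
  -- L-term bound
  have hLu : L * s ^ (κ - 1) * ⟪d, u⟫ ≤ L * C₁ ^ (κ + 1) := by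
    calc L * s ^ (κ - 1) * ⟪d, u⟫ = L * (s ^ (κ - 1) * ⟪d, u⟫) := by ring
      _ ≤ L * (s ^ κ * C₁) := mul_le_mul_of_nonneg_left he hL.le
      _ ≤ L * (C₁ ^ κ * C₁) :=
          mul_le_mul_of_nonneg_left (mul_le_mul_of_nonneg_right hskC hC₁.le) hL.le
      _ = L * C₁ ^ (κ + 1) := by rw [hC₁k]
  -- combine
  have hkey : μ j * (2 / 3 * (-c j xhat)) ≤
      ((f xhat + r xhat) - Fstar) + 2 * (L * C₁ ^ (κ + 1)) := by
    linarith [hst, hfu, hLu, hsum, hlr, hFstar]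
  have hB : 0 ≤ L * C₁ ^ (κ + 1) := by positivity
  have hμM : μ j * (2 / 3 * M) ≤ μ j * (2 / 3 * (-c j xhat)) :=
    mul_le_mul_of_nonneg_left (by linarith) (hμ j)
  have hμMnn : 0 ≤ μ j * (2 / 3 * M) := mul_nonneg (hμ j) (by linarith)
  rw [le_div_iff₀ hMpos]
  linarith
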